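/- Let ε > 0, m > 0, ω(k) := √(m² + |k|²), and let F : ℝ³ → ℂ be measurable with |F(k)| ≤ C(1 + |k|)^N for some constants C and N. Then the function g : ℝ⁴ → ℂ defined by the absolutely convergent integral g(y) := ∫_{ℝ³} F(k) e^{−εω(k)/2} e^{−i(ω(k)y⁰ + k·y⃗)} d³k is real-analytic on all of ℝ⁴. -/

import Mathlib

noncomputable section

open MeasureTheory

/-- `ω(k) = √(m² + |k|²)`. -/
def omegaM (m : ℝ) (k : EuclideanSpace ℝ (Fin 3)) : ℝ := Real.sqrt (m ^ 2 + ‖k‖ ^ 2)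

/-- The regularized lower-mass-shell Fourier-type integral
`g(y) = ∫ F(k) e^{-εω(k)/2} e^{-i(ω(k)y⁰ + k·y⃗)} d³k`. -/
def shellIntegral (m ε : ℝ) (F : EuclideanSpace ℝ (Fin 3) → ℂ)
    (y : EuclideanSpace ℝ (Fin 4)) : ℂ :=
  ∫ k : EuclideanSpace ℝ (Fin 3),
    F k * Complex.exp (-((ε : ℂ) * (omegaM m k : ℂ)) / 2) *
      Complex.exp (-Complex.I *
        ((omegaM m k : ℂ) * (y 0 : ℂ) + ∑ j : Fin 3, (k j : ℂ) * (y j.succ : ℂ)))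

namespace ShellAux

lemma div_le_div_of_nonneg_right' {a b c : ℝ} (h : a ≤ b) (hc : 0 < c) : a / c ≤ b / c := by
  gcongr


lemma omegaM_nonneg (m : ℝ) (k : EuclideanSpace ℝ (Fin 3)) : 0 ≤ omegaM m k := Real.sqrt_nonneg _

lemma norm_le_omegaM (m : ℝ) (k : EuclideanSpace ℝ (Fin 3)) : ‖k‖ ≤ omegaM m k := by
  rw [omegaM, show m ^ 2 + ‖k‖ ^ 2 = ‖k‖ ^ 2 + m ^ 2 by ring]
  refine le_trans ?_ (Real.sqrt_le_sqrt (by nlinarith : ‖k‖ ^ 2 ≤ ‖k‖ ^ 2 + m ^ 2))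
  rw [Real.sqrt_sq (norm_nonneg _)]

lemma continuous_omegaM (m : ℝ) : Continuous (omegaM m) :=
  Real.continuous_sqrt.comp (by continuity)

lemma coord_abs_le_norm {n : ℕ} (y : EuclideanSpace ℝ (Fin n)) (i : Fin n) : |y i| ≤ ‖y‖ := by
  rw [EuclideanSpace.norm_eq]
  have : |y i| = Real.sqrt (|y i| ^ 2) := (Real.sqrt_sq (abs_nonneg _)).symm
  rw [this]
  apply Real.sqrt_le_sqrt
  have := Finset.single_le_sum (f := fun j => ‖y j‖ ^ 2) (fun j _ => by positivity)
    (Finset.mem_univ i)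
  simpa [sq_abs] using this

/-- The real linear phase functional `y ↦ ω(k) y₀ + Σ kⱼ y_{j+1}`. -/
def phaseCLM (m : ℝ) (k : EuclideanSpace ℝ (Fin 3)) : EuclideanSpace ℝ (Fin 4) →L[ℝ] ℝ :=
  omegaM m k • EuclideanSpace.proj (0 : Fin 4) +
    ∑ j : Fin 3, k j • EuclideanSpace.proj (j.succ : Fin 4)

lemma phaseCLM_apply (m : ℝ) (k : EuclideanSpace ℝ (Fin 3)) (y : EuclideanSpace ℝ (Fin 4)) :
    phaseCLM m k y = omegaM m k * y 0 + ∑ j : Fin 3, k j * y j.succ := by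
  simp [phaseCLM]

lemma abs_phaseCLM_le (m : ℝ) (k : EuclideanSpace ℝ (Fin 3)) (y : EuclideanSpace ℝ (Fin 4)) :
    |phaseCLM m k y| ≤ 4 * omegaM m k * ‖y‖ := by
  have hω := omegaM_nonneg m k
  have h0 : |omegaM m k * y 0| ≤ omegaM m k * ‖y‖ := by
    rw [abs_mul, abs_of_nonneg hω]
    exact mul_le_mul_of_nonneg_left (coord_abs_le_norm y 0) hω
  have hj : ∀ j : Fin 3, |k j * y j.succ| ≤ omegaM m k * ‖y‖ := by
    intro j
    rw [abs_mul]
    refine mul_le_mul ?_ (coord_abs_le_norm y j.succ) (abs_nonneg _) hω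
    exact le_trans (coord_abs_le_norm k j) (norm_le_omegaM m k)
  rw [phaseCLM_apply]
  calc |omegaM m k * y 0 + ∑ j : Fin 3, k j * y j.succ|
      ≤ |omegaM m k * y 0| + |∑ j : Fin 3, k j * y j.succ| := abs_add_le _ _
    _ ≤ omegaM m k * ‖y‖ + ∑ j : Fin 3, |k j * y j.succ| := by
        gcongr; exact Finset.abs_sum_le_sum_abs _ _
    _ ≤ omegaM m k * ‖y‖ + ∑ _j : Fin 3, omegaM m k * ‖y‖ := by
        gcongr with j _; exact hj j
    _ = 4 * omegaM m k * ‖y‖ := by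
        simp [Finset.sum_const]; ring

lemma continuous_phaseCLM (m : ℝ) : Continuous (phaseCLM m) := by
  unfold phaseCLM
  refine ((continuous_omegaM m).smul continuous_const).add ?_
  exact continuous_finset_sum _ fun j _ =>
    ((EuclideanSpace.proj (𝕜 := ℝ) j).continuous).smul continuous_const

/-- The complexified phase `y ↦ -i (ω(k) y₀ + Σ kⱼ y_{j+1})` as a continuous `ℝ`-linear map. -/
def LkC (m : ℝ) (k : EuclideanSpace ℝ (Fin 3)) : EuclideanSpace ℝ (Fin 4) →L[ℝ] ℂ :=
  (-Complex.I) • (Complex.ofRealCLM.comp (phaseCLM m k))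

lemma LkC_eq (m : ℝ) (k : EuclideanSpace ℝ (Fin 3)) (y : EuclideanSpace ℝ (Fin 4)) :
    LkC m k y = -Complex.I * ((phaseCLM m k y : ℝ) : ℂ) := by
  simp [LkC]

lemma LkC_apply (m : ℝ) (k : EuclideanSpace ℝ (Fin 3)) (y : EuclideanSpace ℝ (Fin 4)) :
    LkC m k y = -Complex.I *
      ((omegaM m k : ℂ) * (y 0 : ℂ) + ∑ j : Fin 3, (k j : ℂ) * (y j.succ : ℂ)) := by
  rw [LkC_eq, phaseCLM_apply]
  push_cast
  ring

lemma norm_LkC_le (m : ℝ) (k : EuclideanSpace ℝ (Fin 3)) : ‖LkC m k‖ ≤ 4 * omegaM m k := by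
  refine ContinuousLinearMap.opNorm_le_bound _ (by have := ShellAux.omegaM_nonneg m k; positivity) fun y => ?_
  rw [LkC_eq]
  rw [norm_mul]
  simp only [norm_neg, Complex.norm_I, one_mul, Complex.norm_real, Real.norm_eq_abs]
  exact abs_phaseCLM_le m k y

lemma norm_exp_LkC (m : ℝ) (k : EuclideanSpace ℝ (Fin 3)) (y : EuclideanSpace ℝ (Fin 4)) :
    ‖Complex.exp (LkC m k y)‖ = 1 := by
  rw [LkC_eq, Complex.norm_exp]
  simp [Complex.mul_re]

lemma continuous_LkC (m : ℝ) : Continuous (LkC m) := by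
  unfold LkC
  exact ((ContinuousLinearMap.compL ℝ (EuclideanSpace ℝ (Fin 4)) ℝ ℂ
    Complex.ofRealCLM).continuous.comp (continuous_phaseCLM m)).const_smul (-Complex.I)



/-- Polynomial times decaying exponential is integrable on `ℝ³`. -/
lemma integrable_poly_exp (c : ℝ) (hc : 0 < c) (M : ℕ) :
    Integrable (fun k : EuclideanSpace ℝ (Fin 3) => (1 + ‖k‖) ^ M * Real.exp (-(c * ‖k‖))) := by
  have hdim : (Module.finrank ℝ (EuclideanSpace ℝ (Fin 3)) : ℝ) < 4 := by
    simp [finrank_euclideanSpace_fin]; norm_num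
  set P := M + 4 with hP
  set K : ℝ := Real.exp c * (P.factorial : ℝ) / c ^ P with hK
  have hKpos : 0 < K := by positivity
  have key : ∀ k : EuclideanSpace ℝ (Fin 3),
      (1 + ‖k‖) ^ M * Real.exp (-(c * ‖k‖)) ≤ K * (1 + ‖k‖) ^ (-(4 : ℝ)) := by
    intro k
    set t := ‖k‖ with ht'
    have ht : 0 ≤ t := norm_nonneg _
    have h1t : (0 : ℝ) < 1 + t := by linarith
    have hx : (0 : ℝ) < c * (1 + t) := by positivity
    have hexp : (c * (1 + t)) ^ P / (P.factorial : ℝ) ≤ Real.exp (c * (1 + t)) :=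
      Real.pow_div_factorial_le_exp _ (le_of_lt hx) P
    have hpowpos : (0 : ℝ) < (c * (1 + t)) ^ P / (P.factorial : ℝ) := by positivity
    have hinv : Real.exp (-(c * (1 + t))) ≤ (P.factorial : ℝ) / (c * (1 + t)) ^ P := by
      rw [Real.exp_neg, ← inv_div]
      gcongr
    have hsplit : Real.exp (-(c * t)) = Real.exp c * Real.exp (-(c * (1 + t))) := by
      rw [← Real.exp_add]; ring_nf
    have hrpow : (1 + t) ^ (-(4 : ℝ)) = ((1 + t) ^ (4 : ℕ))⁻¹ := by
      rw [Real.rpow_neg (le_of_lt h1t), ← Real.rpow_natCast (1 + t) 4]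
      norm_num
    calc (1 + t) ^ M * Real.exp (-(c * t))
        = (1 + t) ^ M * (Real.exp c * Real.exp (-(c * (1 + t)))) := by rw [hsplit]
      _ ≤ (1 + t) ^ M * (Real.exp c * ((P.factorial : ℝ) / (c * (1 + t)) ^ P)) := by
          gcongr
      _ = K * ((1 + t) ^ (4 : ℕ))⁻¹ := by
          rw [hK, hP, mul_pow, pow_add]
          field_simp
          ring
      _ = K * (1 + t) ^ (-(4 : ℝ)) := by rw [hrpow]
  have hint : Integrable (fun k : EuclideanSpace ℝ (Fin 3) => K * (1 + ‖k‖) ^ (-(4 : ℝ))) :=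
    (integrable_one_add_norm hdim).const_mul K
  refine hint.mono' ?_ (ae_of_all _ fun k => ?_)
  · exact (Continuous.mul (by continuity) (by continuity)).aestronglyMeasurable
  · rw [Real.norm_eq_abs, abs_of_nonneg (by positivity)]
    exact key k

/-- The core real-number estimate. -/
lemma est (ε ω t : ℝ) (hε : 0 < ε) (hω : 0 ≤ ω) (htω : t ≤ ω) (n : ℕ) :
    Real.exp (-(ε * ω) / 2) / (n.factorial : ℝ) * (4 * ω) ^ n * (ε / 32) ^ n ≤
      Real.exp (-(ε / 4 * t)) * (1 / 2) ^ n := by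
  have h2 : (ε * ω / 4) ^ n / (n.factorial : ℝ) ≤ Real.exp (ε * ω / 4) :=
    Real.pow_div_factorial_le_exp _ (by positivity) n
  have h3 : Real.exp (-(ε * ω) / 2) * Real.exp (ε * ω / 4) = Real.exp (-(ε * ω / 4)) := by
    rw [← Real.exp_add]; ring_nf
  have h4 : Real.exp (-(ε * ω / 4)) ≤ Real.exp (-(ε / 4 * t)) := by
    apply Real.exp_le_exp.2; nlinarith
  have h1 : (4 * ω) ^ n * (ε / 32) ^ n = (1 / 2) ^ n * (ε * ω / 4) ^ n := by
    rw [← mul_pow, ← mul_pow]; ring_nf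
  calc Real.exp (-(ε * ω) / 2) / (n.factorial : ℝ) * (4 * ω) ^ n * (ε / 32) ^ n
      = (1 / 2) ^ n * (Real.exp (-(ε * ω) / 2) * ((ε * ω / 4) ^ n / (n.factorial : ℝ))) := by
        rw [mul_assoc, h1]; ring
    _ ≤ (1 / 2) ^ n * (Real.exp (-(ε * ω) / 2) * Real.exp (ε * ω / 4)) := by
        gcongr
    _ = (1 / 2) ^ n * Real.exp (-(ε * ω / 4)) := by rw [h3]
    _ ≤ (1 / 2) ^ n * Real.exp (-(ε / 4 * t)) := by gcongr
    _ = Real.exp (-(ε / 4 * t)) * (1 / 2) ^ n := by ring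


/-- The weight `w(k) = F(k) e^{-εω/2} e^{L_k y₀}`. -/
def wgt (m ε : ℝ) (F : EuclideanSpace ℝ (Fin 3) → ℂ) (y₀ : EuclideanSpace ℝ (Fin 4))
    (k : EuclideanSpace ℝ (Fin 3)) : ℂ :=
  F k * Complex.exp (-((ε : ℂ) * (omegaM m k : ℂ)) / 2) * Complex.exp (LkC m k y₀)

lemma norm_wgt (m ε : ℝ) (F : EuclideanSpace ℝ (Fin 3) → ℂ) (y₀ : EuclideanSpace ℝ (Fin 4))
    (k : EuclideanSpace ℝ (Fin 3)) :
    ‖wgt m ε F y₀ k‖ = ‖F k‖ * Real.exp (-(ε * omegaM m k) / 2) := by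
  have hc : -((ε : ℂ) * (omegaM m k : ℂ)) / 2 = ((-(ε * omegaM m k) / 2 : ℝ) : ℂ) := by
    push_cast; ring
  rw [wgt, norm_mul, norm_mul, hc, norm_exp_LkC, mul_one]
  congr 1
  rw [Complex.norm_exp_ofReal]

lemma measurable_wgt (m ε : ℝ) {F : EuclideanSpace ℝ (Fin 3) → ℂ} (hF : Measurable F)
    (y₀ : EuclideanSpace ℝ (Fin 4)) : Measurable (wgt m ε F y₀) := by
  apply Measurable.mul
  apply Measurable.mul hF
  · exact (Complex.continuous_exp.comp (by
      exact (continuous_const.mul ((Complex.continuous_ofReal.comp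
        (continuous_omegaM m))) |>.neg.div_const 2))).measurable
  · exact (Complex.continuous_exp.comp
      (((ContinuousLinearMap.apply ℝ ℂ y₀).continuous).comp (continuous_LkC m))).measurable

/-- The `n`-linear map `(h₁,…,hₙ) ↦ ∏ᵢ L_k(hᵢ)`. -/
def Qmap (m : ℝ) (k : EuclideanSpace ℝ (Fin 3)) (n : ℕ) :
    ContinuousMultilinearMap ℝ (fun _ : Fin n => EuclideanSpace ℝ (Fin 4)) ℂ :=
  (ContinuousMultilinearMap.mkPiAlgebra ℝ (Fin n) ℂ).compContinuousLinearMap fun _ => LkC m k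

lemma Qmap_apply (m : ℝ) (k : EuclideanSpace ℝ (Fin 3)) (n : ℕ)
    (z : EuclideanSpace ℝ (Fin 4)) : Qmap m k n (fun _ => z) = LkC m k z ^ n := by
  simp [Qmap]

lemma norm_Qmap_le (m : ℝ) (k : EuclideanSpace ℝ (Fin 3)) (n : ℕ) :
    ‖Qmap m k n‖ ≤ (4 * omegaM m k) ^ n := by
  refine le_trans (ContinuousMultilinearMap.norm_compContinuousLinearMap_le _ _) ?_
  rw [ContinuousMultilinearMap.norm_mkPiAlgebra, one_mul]
  calc ∏ _i : Fin n, ‖LkC m k‖ ≤ ∏ _i : Fin n, (4 * omegaM m k) :=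
        Finset.prod_le_prod (fun _ _ => norm_nonneg _) fun _ _ => norm_LkC_le m k
    _ = (4 * omegaM m k) ^ n := by simp

lemma continuous_Qmap (m : ℝ) (n : ℕ) : Continuous fun k => Qmap m k n := by
  have h : (fun k => Qmap m k n) = fun k =>
      (ContinuousMultilinearMap.compContinuousLinearMapLRight
        (ContinuousMultilinearMap.mkPiAlgebra ℝ (Fin n) ℂ))
        (fun _ : Fin n => LkC m k) := rfl
  rw [h]
  exact (ContinuousMultilinearMap.compContinuousLinearMapLRight _).cont.comp
    (continuous_pi fun _ => continuous_LkC m)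

/-- Coefficient integrand of the power series. -/
def qcoef (m ε : ℝ) (F : EuclideanSpace ℝ (Fin 3) → ℂ) (y₀ : EuclideanSpace ℝ (Fin 4))
    (n : ℕ) (k : EuclideanSpace ℝ (Fin 3)) :
    ContinuousMultilinearMap ℝ (fun _ : Fin n => EuclideanSpace ℝ (Fin 4)) ℂ :=
  (wgt m ε F y₀ k / (n.factorial : ℂ)) • Qmap m k n

lemma shellIntegral_eq (m ε : ℝ) (F : EuclideanSpace ℝ (Fin 3) → ℂ)
    (y : EuclideanSpace ℝ (Fin 4)) :
    shellIntegral m ε F y = ∫ k : EuclideanSpace ℝ (Fin 3),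
      F k * Complex.exp (-((ε : ℂ) * (omegaM m k : ℂ)) / 2) * Complex.exp (LkC m k y) := by
  unfold shellIntegral
  congr 1
  funext k
  rw [LkC_apply]

end ShellAux

set_option maxHeartbeats 1000000 in
set_option synthInstance.maxHeartbeats 400000 in
open ShellAux in
/-- Paley–Wiener step in the proof of Theorem 4.2: let `ε > 0`, `m > 0`,
`ω(k) = √(m² + |k|²)`, and `F : ℝ³ → ℂ` measurable with `|F(k)| ≤ C (1 + |k|)^N`. Then
`g(y) = ∫ F(k) e^{-εω(k)/2} e^{-i(ω(k)y⁰ + k·y⃗)} d³k` (an absolutely convergent integral) is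
real-analytic on all of `ℝ⁴`. -/
theorem shellIntegral_analytic (m ε : ℝ) (hm : 0 < m) (hε : 0 < ε)
    (F : EuclideanSpace ℝ (Fin 3) → ℂ) (hF : Measurable F)
    (C : ℝ) (N : ℕ) (hbound : ∀ k, ‖F k‖ ≤ C * (1 + ‖k‖) ^ N) :
    AnalyticOnNhd ℝ (shellIntegral m ε F) Set.univ := by
  intro y₀ _
  set ρ : ℝ := ε / 32 with hρ
  have hρpos : 0 < ρ := by positivity
  set G : EuclideanSpace ℝ (Fin 3) → ℝ :=
    fun k => |C| * ((1 + ‖k‖) ^ N * Real.exp (-(ε / 4 * ‖k‖))) with hGdef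
  have hG_int : Integrable G := (integrable_poly_exp (ε / 4) (by positivity) N).const_mul _
  have hGnonneg : ∀ k, 0 ≤ G k := fun k => by rw [hGdef]; positivity
  have hFk : ∀ k, ‖F k‖ ≤ |C| * (1 + ‖k‖) ^ N := fun k =>
    (hbound k).trans (mul_le_mul_of_nonneg_right (le_abs_self C) (by positivity))
  -- key pointwise bound
  have hqb : ∀ (n : ℕ) k, ‖qcoef m ε F y₀ n k‖ * ρ ^ n ≤ G k * (1 / 2) ^ n := by
    intro n k
    have hω := omegaM_nonneg m k
    have h1 : ‖qcoef m ε F y₀ n k‖ ≤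
        ‖F k‖ * Real.exp (-(ε * omegaM m k) / 2) / (n.factorial : ℝ) *
          (4 * omegaM m k) ^ n := by
      rw [qcoef]
      refine le_trans (ContinuousMultilinearMap.opNorm_smul_le _ _) ?_
      rw [norm_div, Complex.norm_natCast, norm_wgt]
      gcongr
      exact norm_Qmap_le m k n
    have h2 := est ε (omegaM m k) ‖k‖ hε hω (norm_le_omegaM m k) n
    calc ‖qcoef m ε F y₀ n k‖ * ρ ^ n
        ≤ ‖F k‖ * Real.exp (-(ε * omegaM m k) / 2) / (n.factorial : ℝ) *
            (4 * omegaM m k) ^ n * ρ ^ n := by gcongr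
      _ = ‖F k‖ * (Real.exp (-(ε * omegaM m k) / 2) / (n.factorial : ℝ) *
            (4 * omegaM m k) ^ n * ρ ^ n) := by ring
      _ ≤ ‖F k‖ * (Real.exp (-(ε / 4 * ‖k‖)) * (1 / 2) ^ n) := by
          gcongr
      _ ≤ |C| * (1 + ‖k‖) ^ N * (Real.exp (-(ε / 4 * ‖k‖)) * (1 / 2) ^ n) := by
          gcongr
          exact hFk k
      _ = G k * (1 / 2) ^ n := by rw [hGdef]; ring
  have hq_meas : ∀ n : ℕ, AEStronglyMeasurable (qcoef m ε F y₀ n) volume := by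
    intro n
    have hw : Measurable fun k => wgt m ε F y₀ k / (n.factorial : ℂ) :=
      (measurable_wgt m ε hF y₀).div_const _
    exact (hw.stronglyMeasurable.smul
      ((continuous_Qmap m n).stronglyMeasurable)).aestronglyMeasurable
  have hq_int : ∀ n : ℕ, Integrable (qcoef m ε F y₀ n) := by
    intro n
    have hρn : (0 : ℝ) < ρ ^ n := pow_pos hρpos n
    refine (hG_int.mul_const ((1 / 2 : ℝ) ^ n / ρ ^ n)).mono' (hq_meas n)
      (ae_of_all _ fun k => ?_)
    calc ‖qcoef m ε F y₀ n k‖ = ‖qcoef m ε F y₀ n k‖ * ρ ^ n / ρ ^ n := by field_simp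
      _ ≤ G k * (1 / 2) ^ n / ρ ^ n := div_le_div_of_nonneg_right' (hqb n k) hρn
      _ = G k * ((1 / 2) ^ n / ρ ^ n) := by ring
  set p : FormalMultilinearSeries ℝ (EuclideanSpace ℝ (Fin 4)) ℂ :=
    fun n => ∫ k, qcoef m ε F y₀ n k with hpdef
  have hint0 : 0 ≤ ∫ k, G k := integral_nonneg hGnonneg
  have hpn : ∀ n : ℕ, ‖p n‖ * ρ ^ n ≤ ∫ k, G k := by
    intro n
    have hρn : (0 : ℝ) < ρ ^ n := pow_pos hρpos n
    have h1 : ‖p n‖ ≤ ∫ k, ‖qcoef m ε F y₀ n k‖ := norm_integral_le_integral_norm _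
    have h2 : ∫ k, ‖qcoef m ε F y₀ n k‖ ≤ ∫ k, G k * ((1 / 2 : ℝ) ^ n / ρ ^ n) := by
      refine integral_mono (hq_int n).norm (hG_int.mul_const _) fun k => ?_
      calc ‖qcoef m ε F y₀ n k‖ = ‖qcoef m ε F y₀ n k‖ * ρ ^ n / ρ ^ n := by field_simp
        _ ≤ G k * (1 / 2) ^ n / ρ ^ n := div_le_div_of_nonneg_right' (hqb n k) hρn
        _ = G k * ((1 / 2) ^ n / ρ ^ n) := by ring
    have h3 : ∫ k, G k * ((1 / 2 : ℝ) ^ n / ρ ^ n) = (∫ k, G k) * ((1 / 2) ^ n / ρ ^ n) :=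
      integral_mul_const _ _
    calc ‖p n‖ * ρ ^ n ≤ (∫ k, G k) * ((1 / 2) ^ n / ρ ^ n) * ρ ^ n := by
          rw [← h3]; exact mul_le_mul_of_nonneg_right (h1.trans h2) hρn.le
      _ = (∫ k, G k) * (1 / 2) ^ n := by field_simp
      _ ≤ (∫ k, G k) * 1 := by
          gcongr
          exact pow_le_one₀ (by norm_num) (by norm_num)
      _ = ∫ k, G k := mul_one _
  have hrad : ENNReal.ofReal ρ ≤ p.radius := by
    have h := p.le_radius_of_bound (∫ k, G k) (r := ρ.toNNReal) fun n => by
      rw [Real.coe_toNNReal _ hρpos.le]; exact hpn n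
    rwa [ENNReal.ofReal]
  have hball : HasFPowerSeriesOnBall (shellIntegral m ε F) p y₀ (ENNReal.ofReal ρ) := by
    refine ⟨hrad, ENNReal.ofReal_pos.2 hρpos, ?_⟩
    intro z hzball
    have hz : ‖z‖ < ρ := by
      have h := mem_emetric_ball_zero_iff.1 hzball
      rw [← ofReal_norm] at h
      exact (ENNReal.ofReal_lt_ofReal_iff hρpos).1 h
    have happly : ∀ (n : ℕ) k, (qcoef m ε F y₀ n k) (fun _ => z) =
        wgt m ε F y₀ k / (n.factorial : ℂ) * LkC m k z ^ n := by
      intro n k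
      rw [qcoef, ContinuousMultilinearMap.smul_apply, Qmap_apply, smul_eq_mul]
    have hfi : ∀ n : ℕ, Integrable fun k => (qcoef m ε F y₀ n k) (fun _ => z) := fun n =>
      (ContinuousMultilinearMap.apply ℝ (fun _ : Fin n => EuclideanSpace ℝ (Fin 4)) ℂ
        (fun _ => z)).integrable_comp (hq_int n)
    have hfn : ∀ n : ℕ, (∫ k, ‖(qcoef m ε F y₀ n k) (fun _ => z)‖) ≤
        (∫ k, G k) * (1 / 2) ^ n := by
      intro n
      have hb : ∀ k, ‖(qcoef m ε F y₀ n k) (fun _ => z)‖ ≤ G k * (1 / 2) ^ n := by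
        intro k
        have h1 : ‖(qcoef m ε F y₀ n k) (fun _ => z)‖ ≤ ‖qcoef m ε F y₀ n k‖ * ‖z‖ ^ n := by
          have h := (qcoef m ε F y₀ n k).le_opNorm fun _ => z
          simpa using h
        have h2 : ‖qcoef m ε F y₀ n k‖ * ‖z‖ ^ n ≤ ‖qcoef m ε F y₀ n k‖ * ρ ^ n := by
          gcongr
        exact h1.trans (h2.trans (hqb n k))
      calc (∫ k, ‖(qcoef m ε F y₀ n k) (fun _ => z)‖)
          ≤ ∫ k, G k * (1 / 2 : ℝ) ^ n := integral_mono (hfi n).norm (hG_int.mul_const _) hb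
        _ = (∫ k, G k) * (1 / 2) ^ n := integral_mul_const _ _
    have hsummable : Summable fun n : ℕ => ∫ k, ‖(qcoef m ε F y₀ n k) (fun _ => z)‖ := by
      refine Summable.of_nonneg_of_le (fun n => integral_nonneg fun k => norm_nonneg _)
        hfn ?_
      exact (summable_geometric_of_lt_one (by norm_num) (by norm_num)).mul_left _
    have hhs := hasSum_integral_of_summable_integral_norm hfi hsummable
    have hts : ∀ k, (∑' n : ℕ, (qcoef m ε F y₀ n k) (fun _ => z)) =
        F k * Complex.exp (-((ε : ℂ) * (omegaM m k : ℂ)) / 2) *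
          Complex.exp (LkC m k (y₀ + z)) := by
      intro k
      rw [tsum_congr fun n => happly n k]
      have hterm : ∀ n : ℕ, wgt m ε F y₀ k / (n.factorial : ℂ) * LkC m k z ^ n =
          wgt m ε F y₀ k * (LkC m k z ^ n / (n.factorial : ℂ)) := fun n => by ring
      rw [tsum_congr hterm, tsum_mul_left]
      have hexp : (∑' n : ℕ, LkC m k z ^ n / (n.factorial : ℂ)) = Complex.exp (LkC m k z) := by
        rw [Complex.exp_eq_exp_ℂ, NormedSpace.exp_eq_tsum_div]
      rw [hexp, wgt, map_add, Complex.exp_add, mul_assoc, mul_assoc]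
    have hps : ∀ n : ℕ, p n (fun _ => z) = ∫ k, (qcoef m ε F y₀ n k) (fun _ => z) := fun n =>
      ContinuousMultilinearMap.integral_apply (hq_int n) _
    have hkey : (∫ k, ∑' n : ℕ, (qcoef m ε F y₀ n k) (fun _ => z)) =
        shellIntegral m ε F (y₀ + z) := by
      rw [shellIntegral_eq]
      exact integral_congr_ae (ae_of_all _ fun k => hts k)
    rw [show (fun n : ℕ => p n fun _ => z) = fun n => ∫ k, (qcoef m ε F y₀ n k) (fun _ => z)
      from funext hps]
    exact hkey ▸ hhs
  exact hball.analyticAt
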